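/- Let Φ : C → C and Ψ : D → D be endofunctors with initial algebras ι_Φ and ι_Ψ (with carriers μΦ and μΨ), let (L ⊣ R, η, ε) : C ⇄ D be an adjunction with L full and faithful, let ρ : LΦR ⇒ Ψ be a natural transformation, and assume D has an initial object and all colimits of chains. If (1) the adjoint transpose ρ‾ : ΦR ⇒ RΨ of ρ is a natural isomorphism (or alternatively ρL ∘ LΦη : LΦ ⇒ ΨL is a natural isomorphism), (2) the initial chain of Ψ converges, and (3) every object Ψ^i 0 of the initial chain of Ψ lies in Fix_ε(D), then the initial algebra correspondence for Φ and Ψ holds, i.e. ι_Φ is initial in Alg(Φ)|Fix_η(C) and Alg_{id,ρ}(ι_Ψ) is initial in Alg(LΦR)|Fix_ε(D). Furthermore, if Fix_ε(D) is downward closed in D (Y ∈ Fix_ε(D) and the existence of a morphism X → Y in D imply X ∈ Fix_ε(D)), then condition (3) is implied by the global reachability condition μΨ ∈ Fix_ε(D). -/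

import Mathlib

/-!
STATEMENT 12: Let `Φ : C → C` and `Ψ : D → D` be endofunctors with initial algebras `ι_Φ` and
`ι_Ψ` (with carriers `μΦ` and `μΨ`), let `(L ⊣ R, η, ε) : C ⇄ D` be an adjunction with `L` full
and faithful, let `ρ : LΦR ⇒ Ψ` be a natural transformation, and assume `D` has an initial
object and all colimits of chains.  If (1) the adjoint transpose `ρ‾ : ΦR ⇒ RΨ` of `ρ` is a
natural isomorphism, (2) the initial chain of `Ψ` converges, and (3) every object `Ψ^i 0` of
the initial chain of `Ψ` lies in `Fix_ε(D)`, then the initial algebra correspondence for `Φ`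
and `Ψ` holds, i.e. `ι_Φ` is initial in `Alg(Φ)|Fix_η(C)` and `Alg_{id,ρ}(ι_Ψ)` is initial in
`Alg(LΦR)|Fix_ε(D)`.  Furthermore, if `Fix_ε(D)` is downward closed in `D` (`Y ∈ Fix_ε(D)` and
the existence of a morphism `X → Y` imply `X ∈ Fix_ε(D)`), then condition (3) is implied by the
global reachability condition `μΨ ∈ Fix_ε(D)`.
-/

open CategoryTheory Limits

universe w v₁ v₂ u₁ u₂

variable {C : Type u₁} [Category.{v₁} C] {D : Type u₂} [Category.{v₂} D]

/-- The restriction of the category of `Φ`-algebras to the full subcategory given by `P`. -/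
abbrev AlgSub {E : Type u₁} [Category.{v₁} E] (Φ : E ⥤ E) (P : E → Prop) :=
  ObjectProperty.FullSubcategory (fun A : Endofunctor.Algebra Φ => P A.a)

/-- The inclusion of the ordinals below `i` into `Ordinal`. -/
def belowIncl (i : Ordinal.{w}) : {j : Ordinal.{w} // j < i} ⥤ Ordinal.{w} :=
  Monotone.functor (f := fun j => j.1) fun _ _ h => h

/-- The canonical cocone on the restriction of a chain `W` to the ordinals below `i`,
with cocone point `W.obj i`. -/
def chainCocone {E : Type u₂} [Category.{v₂} E] (W : Ordinal.{w} ⥤ E) (i : Ordinal.{w}) :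
    Cocone (belowIncl i ⋙ W) where
  pt := W.obj i
  ι :=
    { app := fun j => W.map (homOfLE j.2.le)
      naturality := fun j k f => by
        dsimp [belowIncl]
        rw [Category.comp_id, ← W.map_comp]
        congr 1 }

/-- Data exhibiting the functor `W : Ord ⥤ E` as the initial chain of an endofunctor `Ξ`. -/
structure InitialChainData {E : Type u₂} [Category.{v₂} E] (Ξ : E ⥤ E)
    (W : Ordinal.{w} ⥤ E) where
  isInitial : IsInitial (W.obj 0)
  succ_obj : ∀ i : Ordinal.{w}, W.obj (Order.succ i) = Ξ.obj (W.obj i)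
  succ_map : ∀ (i j : Ordinal.{w}) (h : i ≤ j),
    W.map (homOfLE (Order.succ_le_succ h)) =
      eqToHom (succ_obj i) ≫ Ξ.map (W.map (homOfLE h)) ≫ eqToHom (succ_obj j).symm
  isColimit : ∀ i : Ordinal.{w}, Order.IsSuccLimit i → IsColimit (chainCocone W i)


section Sol
variable (Ψ : D ⥤ D) (W : Ordinal.{w} ⥤ D) (hW : InitialChainData Ψ W) (A : D)
  (σ : ∀ i : Ordinal.{w}, (W.obj i ⟶ A) → (Ψ.obj (W.obj i) ⟶ A))

inductive Sol : ∀ i : Ordinal.{w}, (W.obj i ⟶ A) → Prop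
  | zero : Sol 0 (hW.isInitial.to A)
  | succ (i : Ordinal.{w}) (f : W.obj i ⟶ A) (h : Sol i f) :
      Sol (Order.succ i) (eqToHom (hW.succ_obj i) ≫ σ i f)
  | limit (i : Ordinal.{w}) (hi : Order.IsSuccLimit i) (f : W.obj i ⟶ A)
      (h : ∀ j (hj : j < i), Sol j (W.map (homOfLE hj.le) ≫ f)) : Sol i f

variable {Ψ W hW A σ}

lemma sol_zero' (f : W.obj 0 ⟶ A) : Sol Ψ W hW A σ 0 f := by
  rw [hW.isInitial.hom_ext f (hW.isInitial.to A)]; exact Sol.zero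

lemma sol_succ_inv {i : Ordinal.{w}} {f : W.obj (Order.succ i) ⟶ A}
    (h : Sol Ψ W hW A σ (Order.succ i) f) :
    ∃ g, Sol Ψ W hW A σ i g ∧ f = eqToHom (hW.succ_obj i) ≫ σ i g := by
  have key : ∀ (k : Ordinal.{w}) (f : W.obj k ⟶ A), Sol Ψ W hW A σ k f →
      ∀ i (e : k = Order.succ i), ∃ g, Sol Ψ W hW A σ i g ∧
        f = eqToHom (congrArg W.obj e) ≫ eqToHom (hW.succ_obj i) ≫ σ i g := by
    intro k f h
    induction h with
    | zero => exact fun i e => absurd e.symm (Ordinal.succ_ne_zero i)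
    | succ j g hg _ =>
        intro i e
        obtain rfl : j = i := Order.succ_injective e
        exact ⟨g, hg, by simp⟩
    | limit j hj f h _ => exact fun i e => absurd (e ▸ hj) (Order.not_isSuccLimit_succ i)
  simpa using key _ f h i rfl

lemma sol_limit_inv {k : Ordinal.{w}} {f : W.obj k ⟶ A} (hk : Order.IsSuccLimit k)
    (h : Sol Ψ W hW A σ k f) : ∀ j (hj : j < k), Sol Ψ W hW A σ j (W.map (homOfLE hj.le) ≫ f) := by
  cases h with
  | zero => exact absurd hk Order.not_isSuccLimit_bot
  | succ j g hg => exact absurd hk (Order.not_isSuccLimit_succ j)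
  | limit j hj f h => exact h

variable (hσ : ∀ ⦃j k : Ordinal.{w}⦄ (h : j ≤ k) (f : W.obj k ⟶ A),
    Ψ.map (W.map (homOfLE h)) ≫ σ k f = σ j (W.map (homOfLE h) ≫ f))

include hσ

/-- The main computation: restricting a successor-level solution value along the chain. -/
lemma sol_comp {j i : Ordinal.{w}} (hji : j ≤ i) (g : W.obj i ⟶ A) :
    W.map (homOfLE (hji.trans (Order.le_succ i))) ≫ eqToHom (hW.succ_obj i) ≫ σ i g =
      W.map (homOfLE (Order.le_succ j)) ≫ eqToHom (hW.succ_obj j) ≫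
        σ j (W.map (homOfLE hji) ≫ g) := by
  rw [show homOfLE (hji.trans (Order.le_succ i)) =
      homOfLE (Order.le_succ j) ≫ homOfLE (Order.succ_le_succ hji) from Subsingleton.elim _ _,
    W.map_comp, hW.succ_map j i hji]
  simp [hσ hji g]

theorem sol_key : ∀ k : Ordinal.{w},
    (∀ f, Sol Ψ W hW A σ k f → ∀ j (h : j ≤ k), Sol Ψ W hW A σ j (W.map (homOfLE h) ≫ f)) ∧
    (∀ f g, Sol Ψ W hW A σ k f → Sol Ψ W hW A σ k g → f = g) ∧
    (∃ f, Sol Ψ W hW A σ k f) := by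
  intro k
  induction k using Ordinal.induction with
  | h k IH =>
  have triv : ∀ (f : W.obj k ⟶ A) (h : k ≤ k), Sol Ψ W hW A σ k f →
      Sol Ψ W hW A σ k (W.map (homOfLE h) ≫ f) := by
    intro f h hf
    rwa [show homOfLE h = 𝟙 k from Subsingleton.elim _ _, W.map_id, Category.id_comp]
  obtain rfl | ⟨i, rfl⟩ | hk := Ordinal.zero_or_succ_or_isSuccLimit k
  · refine ⟨?_, fun f g _ _ => hW.isInitial.hom_ext f g, ⟨_, Sol.zero⟩⟩
    intro f hf j hj
    obtain rfl : j = 0 := nonpos_iff_eq_zero.1 hj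
    exact sol_zero' _
  · -- k = succ i
    have res_i := (IH i (Order.lt_succ i)).1
    refine ⟨?_, ?_, ?_⟩
    · intro f hf j hj
      rcases eq_or_lt_of_le hj with rfl | hjlt
      · exact triv f hj hf
      · have hji : j ≤ i := Order.lt_succ_iff.mp hjlt
        obtain ⟨g, hg, rfl⟩ := sol_succ_inv hf
        rcases eq_or_lt_of_le hji with rfl | hji'
        · -- key identity case : j = i
          rcases Ordinal.zero_or_succ_or_isSuccLimit j with rfl | ⟨i', rfl⟩ | hj'
          · exact sol_zero' _
          · rw [show homOfLE hj = homOfLE (Order.succ_le_succ (Order.le_succ i')) from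
              Subsingleton.elim _ _, hW.succ_map i' (Order.succ i') (Order.le_succ i')]
            have : (eqToHom (hW.succ_obj i') ≫ Ψ.map (W.map (homOfLE (Order.le_succ i'))) ≫
                eqToHom (hW.succ_obj (Order.succ i')).symm) ≫
                eqToHom (hW.succ_obj (Order.succ i')) ≫ σ (Order.succ i') g =
                eqToHom (hW.succ_obj i') ≫
                  σ i' (W.map (homOfLE (Order.le_succ i')) ≫ g) := by
              simp [hσ (Order.le_succ i') g]
            rw [this]
            exact Sol.succ i' _ (res_i g hg i' (Order.le_succ i'))
          · refine Sol.limit j hj' _ (fun j' hj'' => ?_)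
            rw [← Functor.map_comp_assoc,
              show homOfLE hj''.le ≫ homOfLE hj = homOfLE (hj''.le.trans (Order.le_succ j)) from
                Subsingleton.elim _ _,
              sol_comp (hW := hW) hσ hj''.le g]
            have hg' := res_i g hg j' hj''.le
            have hlt : Order.succ j' < Order.succ j :=
              (hj'.succ_lt hj'').trans (Order.lt_succ j)
            exact (IH _ hlt).1 _ (Sol.succ j' _ hg') j' (Order.le_succ j')
        · -- j < i
          rw [show homOfLE hj = homOfLE (hji.trans (Order.le_succ i)) from Subsingleton.elim _ _,
            sol_comp (hW := hW) hσ hji g]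
          have hg' := res_i g hg j hji
          exact (IH _ (Order.succ_lt_succ hji')).1 _ (Sol.succ j _ hg') j (Order.le_succ j)
    · intro f g hf hg
      obtain ⟨f₀, hf₀, rfl⟩ := sol_succ_inv hf
      obtain ⟨g₀, hg₀, rfl⟩ := sol_succ_inv hg
      rw [(IH i (Order.lt_succ i)).2.1 f₀ g₀ hf₀ hg₀]
    · obtain ⟨f₀, hf₀⟩ := (IH i (Order.lt_succ i)).2.2
      exact ⟨_, Sol.succ i f₀ hf₀⟩
  · -- k limit
    refine ⟨?_, ?_, ?_⟩
    · intro f hf j hj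
      rcases eq_or_lt_of_le hj with rfl | hjlt
      · exact triv f hj hf
      · exact sol_limit_inv hk hf j hjlt
    · intro f g hf hg
      refine (hW.isColimit k hk).hom_ext (fun j => ?_)
      have := (IH j.1 j.2).2.1 _ _ (sol_limit_inv hk hf j.1 j.2) (sol_limit_inv hk hg j.1 j.2)
      exact this
    · choose fam hfam using fun (j : {j : Ordinal.{w} // j < k}) => (IH j.1 j.2).2.2
      have compat : ∀ (j j' : {j : Ordinal.{w} // j < k}) (h : j.1 ≤ j'.1),
          W.map (homOfLE h) ≫ fam j' = fam j := by
        intro j j' h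
        exact (IH j.1 j.2).2.1 _ _ ((IH j'.1 j'.2).1 _ (hfam j') j.1 h) (hfam j)
      let co : Cocone (belowIncl k ⋙ W) :=
        { pt := A
          ι :=
            { app := fun j => fam j
              naturality := fun j j' g => by
                dsimp [belowIncl]
                exact (compat j j' (leOfHom g)).trans (Category.comp_id _).symm } }
      refine ⟨(hW.isColimit k hk).desc co, Sol.limit k hk _ (fun j hj => ?_)⟩
      have fac := (hW.isColimit k hk).fac co ⟨j, hj⟩
      simp only [chainCocone] at fac
      convert hfam ⟨j, hj⟩ using 1
      exact fac

noncomputable def chainSol (i : Ordinal.{w}) : W.obj i ⟶ A := (sol_key (hW := hW) hσ i).2.2.choose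

lemma chainSol_sol (i : Ordinal.{w}) : Sol Ψ W hW A σ i (chainSol (hW := hW) hσ i) :=
  (sol_key (hW := hW) hσ i).2.2.choose_spec

lemma chainSol_unique {i : Ordinal.{w}} {f : W.obj i ⟶ A} (h : Sol Ψ W hW A σ i f) :
    f = chainSol (hW := hW) hσ i :=
  (sol_key (hW := hW) hσ i).2.1 f _ h (chainSol_sol (hW := hW) hσ i)

lemma chainSol_compat {j i : Ordinal.{w}} (h : j ≤ i) :
    W.map (homOfLE h) ≫ chainSol (hW := hW) hσ i = chainSol (hW := hW) hσ j :=
  chainSol_unique (hW := hW) hσ ((sol_key (hW := hW) hσ i).1 _ (chainSol_sol (hW := hW) hσ i) j h)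

lemma chainSol_succ (i : Ordinal.{w}) :
    chainSol (hW := hW) hσ (Order.succ i) = eqToHom (hW.succ_obj i) ≫ σ i (chainSol (hW := hW) hσ i) :=
  (chainSol_unique (hW := hW) hσ (Sol.succ i _ (chainSol_sol (hW := hW) hσ i))).symm

lemma chainSol_ext (u : ∀ i : Ordinal.{w}, W.obj i ⟶ A)
    (hsucc : ∀ i, u (Order.succ i) = eqToHom (hW.succ_obj i) ≫ σ i (u i))
    (hlim : ∀ i, Order.IsSuccLimit i → ∀ j (hj : j < i), W.map (homOfLE hj.le) ≫ u i = u j) :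
    ∀ i, u i = chainSol (hW := hW) hσ i := by
  intro i
  apply chainSol_unique
  induction i using Ordinal.induction with
  | h k IH =>
    obtain rfl | ⟨i, rfl⟩ | hk := Ordinal.zero_or_succ_or_isSuccLimit k
    · exact sol_zero' _
    · rw [hsucc i]; exact Sol.succ _ _ (IH i (Order.lt_succ i))
    · exact Sol.limit k hk _ (fun j hj => by rw [hlim k hk j hj]; exact IH j hj)

end Sol

section Helpers
variable {C : Type u₁} [Category.{v₁} C] {L : C ⥤ D} {R : D ⥤ C}

/-- `Fix_ε` is closed under retracts. -/
lemma counit_isIso_of_retract (adj : L ⊣ R) {X Y : D} (s : X ⟶ Y) (r : Y ⟶ X)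
    (hsr : s ≫ r = 𝟙 X) (h : IsIso (adj.counit.app Y)) : IsIso (adj.counit.app X) := by
  haveI := h
  refine ⟨s ≫ inv (adj.counit.app Y) ≫ L.map (R.map r), ?_, ?_⟩
  · rw [← Category.assoc, ← adj.counit_naturality s, Category.assoc, IsIso.hom_inv_id_assoc,
      ← L.map_comp, ← R.map_comp, hsr, R.map_id, L.map_id]; rfl
  · rw [Category.assoc, Category.assoc, adj.counit_naturality r, IsIso.inv_hom_id_assoc, hsr]; rfl

/-- If the unit is an isomorphism, the counit is an isomorphism at objects in the image of `L`. -/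
lemma counit_isIso_app_L (adj : L ⊣ R) [IsIso adj.unit] (X : C) :
    IsIso (adj.counit.app (L.obj X)) := by
  haveI : IsIso (L.map (adj.unit.app X)) := inferInstance
  haveI : IsIso (L.map (adj.unit.app X) ≫ adj.counit.app (L.obj X)) := by
    rw [adj.left_triangle_components X]; exact IsIso.id _
  exact IsIso.of_isIso_comp_left (L.map (adj.unit.app X)) (adj.counit.app (L.obj X))

/-- If the transpose of `ρ` is an isomorphism at `Y`, the unit is an isomorphism and the
counit is an isomorphism at `Ψ.obj Y`, then `ρ` itself is an isomorphism at `Y`. -/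
lemma rho_isIso {Φ : C ⥤ C} {Ψ : D ⥤ D} (adj : L ⊣ R) [IsIso adj.unit]
    (ρ : (R ⋙ Φ ⋙ L) ⟶ Ψ) {Y : D}
    (h₁ : IsIso (adj.unit.app (Φ.obj (R.obj Y)) ≫ R.map (ρ.app Y)))
    (h₂ : IsIso (adj.counit.app (Ψ.obj Y))) : IsIso (ρ.app Y) := by
  haveI := h₁; haveI := h₂
  haveI : IsIso (R.map (ρ.app Y)) :=
    IsIso.of_isIso_comp_left (adj.unit.app (Φ.obj (R.obj Y))) (R.map (ρ.app Y))
  haveI : IsIso (adj.counit.app ((R ⋙ Φ ⋙ L).obj Y)) := counit_isIso_app_L adj _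
  have n : ρ.app Y =
      inv (adj.counit.app ((R ⋙ Φ ⋙ L).obj Y)) ≫ L.map (R.map (ρ.app Y)) ≫
        adj.counit.app (Ψ.obj Y) := by
    rw [adj.counit_naturality (ρ.app Y), IsIso.inv_hom_id_assoc]
  rw [n]; infer_instance

end Helpers

theorem stmt12 (Φ : C ⥤ C) (Ψ : D ⥤ D) (L : C ⥤ D) (R : D ⥤ C) (adj : L ⊣ R)
    [L.Full] [L.Faithful]
    (ρ : (R ⋙ Φ ⋙ L) ⟶ Ψ)
    -- `D` has an initial object and all colimits of chains
    [HasInitial D] (hchains : ∀ (J : Type (w + 1)) (_ : LinearOrder J), HasColimitsOfShape J D)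
    -- the initial algebras `ι_Φ` and `ι_Ψ`
    (ιΦ : Endofunctor.Algebra Φ) (hιΦ : IsInitial ιΦ)
    (ιΨ : Endofunctor.Algebra Ψ) (hιΨ : IsInitial ιΨ)
    -- the initial chain of `Ψ`
    (W : Ordinal.{w} ⥤ D) (hW : InitialChainData Ψ W)
    -- (1) the adjoint transpose `ρ‾ : ΦR ⇒ RΨ` of `ρ` is a natural isomorphism
    (h₁ : ∀ Y : D, IsIso (adj.unit.app (Φ.obj (R.obj Y)) ≫ R.map (ρ.app Y)))
    -- (2) the initial chain of `Ψ` converges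
    (h₂ : ∃ l : Ordinal.{w}, IsIso (W.map (homOfLE (Order.le_succ l)))) :
    -- if (3) the initial chain of `Ψ` lies in `Fix_ε(D)`, the correspondence holds
    ((∀ i : Ordinal.{w}, IsIso (adj.counit.app (W.obj i))) →
      (∃ h : IsIso (adj.unit.app ιΦ.a),
        Nonempty (IsInitial (⟨ιΦ, h⟩ : AlgSub Φ (fun X : C => IsIso (adj.unit.app X))))) ∧
      (∃ h : IsIso (adj.counit.app ιΨ.a),
        Nonempty (IsInitial
          (⟨⟨ιΨ.a, ρ.app ιΨ.a ≫ ιΨ.str⟩, h⟩ :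
            AlgSub (R ⋙ Φ ⋙ L) (fun Y : D => IsIso (adj.counit.app Y)))))) ∧
    -- furthermore: downward closedness of `Fix_ε(D)` + global reachability imply (3)
    ((∀ X Y : D, (X ⟶ Y) → IsIso (adj.counit.app Y) → IsIso (adj.counit.app X)) →
      IsIso (adj.counit.app ιΨ.a) →
      ∀ i : Ordinal.{w}, IsIso (adj.counit.app (W.obj i))) := by
  haveI : IsIso adj.unit := inferInstance
  obtain ⟨l, hl⟩ := h₂
  haveI : IsIso (W.map (homOfLE (Order.le_succ l))) := hl
  -- the canonical compatible family from the chain into the initial algebra `ιΨ`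
  have hσA : ∀ ⦃j k : Ordinal.{w}⦄ (h : j ≤ k) (f : W.obj k ⟶ ιΨ.a),
      Ψ.map (W.map (homOfLE h)) ≫ (Ψ.map f ≫ ιΨ.str) =
        Ψ.map (W.map (homOfLE h) ≫ f) ≫ ιΨ.str := by
    intro j k h f; rw [← Category.assoc, ← Ψ.map_comp]
  obtain ⟨E, hE1, hE2, hE3⟩ :
      ∃ E : ∀ i : Ordinal.{w}, W.obj i ⟶ ιΨ.a,
        (∀ (j i : Ordinal.{w}) (h : j ≤ i), W.map (homOfLE h) ≫ E i = E j) ∧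
        (∀ i : Ordinal.{w},
          E (Order.succ i) = eqToHom (hW.succ_obj i) ≫ Ψ.map (E i) ≫ ιΨ.str) ∧
        (∀ u : ∀ i : Ordinal.{w}, W.obj i ⟶ ιΨ.a,
          (∀ i, u (Order.succ i) = eqToHom (hW.succ_obj i) ≫ Ψ.map (u i) ≫ ιΨ.str) →
          (∀ i, Order.IsSuccLimit i → ∀ j (hj : j < i), W.map (homOfLE hj.le) ≫ u i = u j) →
          ∀ i, u i = E i) :=
    ⟨chainSol (hW := hW) (σ := fun i f => Ψ.map f ≫ ιΨ.str) hσA,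
      fun j i h => chainSol_compat (hW := hW) (σ := fun i f => Ψ.map f ≫ ιΨ.str) hσA h,
      fun i => chainSol_succ (hW := hW) (σ := fun i f => Ψ.map f ≫ ιΨ.str) hσA i,
      fun u h1 h2 => chainSol_ext (hW := hW) (σ := fun i f => Ψ.map f ≫ ιΨ.str) hσA u h1 h2⟩
  -- `E l` is an algebra morphism from the algebra induced on `W.obj l`, and a retraction
  have hEl : E l = W.map (homOfLE (Order.le_succ l)) ≫ eqToHom (hW.succ_obj l) ≫
      Ψ.map (E l) ≫ ιΨ.str := by
    conv_lhs => rw [← hE1 l (Order.succ l) (Order.le_succ l), hE2 l]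
  have hinvEl : inv (W.map (homOfLE (Order.le_succ l))) ≫ E l =
      eqToHom (hW.succ_obj l) ≫ Ψ.map (E l) ≫ ιΨ.str := by
    rw [IsIso.inv_comp_eq]; exact hEl
  have halg : Ψ.map (E l) ≫ ιΨ.str =
      (eqToHom (hW.succ_obj l).symm ≫ inv (W.map (homOfLE (Order.le_succ l)))) ≫ E l := by
    rw [Category.assoc, hinvEl, eqToHom_trans_assoc, eqToHom_refl, Category.id_comp]
  obtain ⟨f0, hf0, hretr⟩ : ∃ f0 : ιΨ.a ⟶ W.obj l,
      Ψ.map f0 ≫ (eqToHom (hW.succ_obj l).symm ≫ inv (W.map (homOfLE (Order.le_succ l)))) =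
        ιΨ.str ≫ f0 ∧ f0 ≫ E l = 𝟙 ιΨ.a := by
    refine ⟨(hιΨ.to ⟨W.obj l, eqToHom (hW.succ_obj l).symm ≫
      inv (W.map (homOfLE (Order.le_succ l)))⟩).f,
      (hιΨ.to ⟨W.obj l, eqToHom (hW.succ_obj l).symm ≫
        inv (W.map (homOfLE (Order.le_succ l)))⟩).h, ?_⟩
    have h2 : hιΨ.to _ ≫ (⟨E l, halg⟩ :
        (⟨W.obj l, eqToHom (hW.succ_obj l).symm ≫
          inv (W.map (homOfLE (Order.le_succ l)))⟩ : Endofunctor.Algebra Ψ) ⟶ ιΨ) =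
        𝟙 ιΨ := hιΨ.hom_ext _ _
    exact congrArg Endofunctor.Algebra.Hom.f h2
  refine ⟨fun hfix3 => ?_, fun dc hμ i => dc _ _ (E i) hμ⟩
  -- part 1, assuming the chain lies in `Fix_ε`
  have hειΨ : IsIso (adj.counit.app ιΨ.a) :=
    counit_isIso_of_retract adj f0 (E l) hretr (hfix3 l)
  have hεΨW : ∀ i : Ordinal.{w}, IsIso (adj.counit.app (Ψ.obj (W.obj i))) := by
    intro i; rw [← hW.succ_obj i]; exact hfix3 _
  have hρW : ∀ i : Ordinal.{w}, IsIso (ρ.app (W.obj i)) :=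
    fun i => rho_isIso adj ρ (h₁ _) (hεΨW i)
  haveI : IsIso ιΨ.str := Endofunctor.Algebra.Initial.str_isIso hιΨ
  have hεΨμ : IsIso (adj.counit.app (Ψ.obj ιΨ.a)) :=
    counit_isIso_of_retract adj ιΨ.str (inv ιΨ.str) (by simp) hειΨ
  haveI hρμ : IsIso (ρ.app ιΨ.a) := rho_isIso adj ρ (h₁ _) hεΨμ
  constructor
  · exact ⟨inferInstance,
      ⟨IsInitial.ofUniqueHom (fun B => ObjectProperty.homMk (hιΦ.to B.obj)) (fun B m => InducedCategory.hom_ext (hιΦ.hom_ext m.hom _))⟩⟩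
  · have key : ∀ B : AlgSub (R ⋙ Φ ⋙ L) (fun Y : D => IsIso (adj.counit.app Y)),
        ∃ m0 : (⟨⟨ιΨ.a, ρ.app ιΨ.a ≫ ιΨ.str⟩, hειΨ⟩ :
          AlgSub (R ⋙ Φ ⋙ L) (fun Y : D => IsIso (adj.counit.app Y))) ⟶ B, ∀ m, m = m0 := by
      intro B
      have hσY : ∀ ⦃j k : Ordinal.{w}⦄ (h : j ≤ k) (f : W.obj k ⟶ B.obj.a),
          Ψ.map (W.map (homOfLE h)) ≫
            (@inv _ _ _ _ (ρ.app (W.obj k)) (hρW k) ≫ (R ⋙ Φ ⋙ L).map f ≫ B.obj.str) =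
          @inv _ _ _ _ (ρ.app (W.obj j)) (hρW j) ≫
            (R ⋙ Φ ⋙ L).map (W.map (homOfLE h) ≫ f) ≫ B.obj.str := by
        intro j k h f
        haveI := hρW j; haveI := hρW k
        rw [IsIso.eq_inv_comp, ← Category.assoc, ← ρ.naturality (W.map (homOfLE h)),
          Category.assoc, IsIso.hom_inv_id_assoc, ← Functor.map_comp_assoc]
      obtain ⟨U, hU1, hU2, hU3⟩ :
          ∃ U : ∀ i : Ordinal.{w}, W.obj i ⟶ B.obj.a,
            (∀ (j i : Ordinal.{w}) (h : j ≤ i), W.map (homOfLE h) ≫ U i = U j) ∧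
            (∀ i : Ordinal.{w}, U (Order.succ i) = eqToHom (hW.succ_obj i) ≫
              @inv _ _ _ _ (ρ.app (W.obj i)) (hρW i) ≫ (R ⋙ Φ ⋙ L).map (U i) ≫ B.obj.str) ∧
            (∀ u : ∀ i : Ordinal.{w}, W.obj i ⟶ B.obj.a,
              (∀ i, u (Order.succ i) = eqToHom (hW.succ_obj i) ≫
                @inv _ _ _ _ (ρ.app (W.obj i)) (hρW i) ≫ (R ⋙ Φ ⋙ L).map (u i) ≫ B.obj.str) →
              (∀ i, Order.IsSuccLimit i → ∀ j (hj : j < i), W.map (homOfLE hj.le) ≫ u i = u j) →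
              ∀ i, u i = U i) :=
        ⟨chainSol (hW := hW)
            (σ := fun i f => @inv _ _ _ _ (ρ.app (W.obj i)) (hρW i) ≫
              (R ⋙ Φ ⋙ L).map f ≫ B.obj.str) hσY,
          fun j i h => chainSol_compat (hW := hW)
            (σ := fun i f => @inv _ _ _ _ (ρ.app (W.obj i)) (hρW i) ≫
              (R ⋙ Φ ⋙ L).map f ≫ B.obj.str) hσY h,
          fun i => chainSol_succ (hW := hW)
            (σ := fun i f => @inv _ _ _ _ (ρ.app (W.obj i)) (hρW i) ≫
              (R ⋙ Φ ⋙ L).map f ≫ B.obj.str) hσY i,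
          fun u hu1 hu2 => chainSol_ext (hW := hW)
            (σ := fun i f => @inv _ _ _ _ (ρ.app (W.obj i)) (hρW i) ≫
              (R ⋙ Φ ⋙ L).map f ≫ B.obj.str) hσY u hu1 hu2⟩
      haveI := hρW l
      have hUl : U l = W.map (homOfLE (Order.le_succ l)) ≫ eqToHom (hW.succ_obj l) ≫
          inv (ρ.app (W.obj l)) ≫ (R ⋙ Φ ⋙ L).map (U l) ≫ B.obj.str := by
        conv_lhs => rw [← hU1 l (Order.succ l) (Order.le_succ l), hU2 l]
      have hinvUl : inv (W.map (homOfLE (Order.le_succ l))) ≫ U l =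
          eqToHom (hW.succ_obj l) ≫ inv (ρ.app (W.obj l)) ≫
            (R ⋙ Φ ⋙ L).map (U l) ≫ B.obj.str := by
        rw [IsIso.inv_comp_eq]; exact hUl
      have hstep : (eqToHom (hW.succ_obj l).symm ≫
          inv (W.map (homOfLE (Order.le_succ l)))) ≫ U l =
          inv (ρ.app (W.obj l)) ≫ (R ⋙ Φ ⋙ L).map (U l) ≫ B.obj.str := by
        rw [Category.assoc, hinvUl, eqToHom_trans_assoc, eqToHom_refl, Category.id_comp]
      -- the underlying morphism of the canonical algebra morphism
      have hm0 : (R ⋙ Φ ⋙ L).map (f0 ≫ U l) ≫ B.obj.str =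
          (ρ.app ιΨ.a ≫ ιΨ.str) ≫ (f0 ≫ U l) := by
        rw [Functor.map_comp, Category.assoc, Category.assoc]
        conv_rhs => rw [← Category.assoc ιΨ.str f0 (U l), ← hf0, Category.assoc, hstep,
          ← Category.assoc (ρ.app ιΨ.a) (Ψ.map f0), ← ρ.naturality f0, Category.assoc,
          IsIso.hom_inv_id_assoc]
      refine ⟨ObjectProperty.homMk ⟨_, hm0⟩, ?_⟩
      intro m
      have hsub : ιΨ.str ≫ m.hom.f = inv (ρ.app ιΨ.a) ≫ (R ⋙ Φ ⋙ L).map m.hom.f ≫ B.obj.str := by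
        rw [IsIso.eq_inv_comp, ← Category.assoc]; exact m.hom.h.symm
      have hv : ∀ i, E i ≫ m.hom.f = U i := by
        refine hU3 (fun i => E i ≫ m.hom.f) (fun i => ?_) (fun i hi j hj => ?_)
        · haveI := hρW i
          show E (Order.succ i) ≫ m.hom.f = eqToHom (hW.succ_obj i) ≫ inv (ρ.app (W.obj i)) ≫
            (R ⋙ Φ ⋙ L).map (E i ≫ m.hom.f) ≫ B.obj.str
          have hx : Ψ.map (E i) ≫ inv (ρ.app ιΨ.a) =
              inv (ρ.app (W.obj i)) ≫ (R ⋙ Φ ⋙ L).map (E i) := by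
            rw [IsIso.eq_inv_comp, ← Category.assoc, ← ρ.naturality (E i), Category.assoc,
              IsIso.hom_inv_id, Category.comp_id]
          rw [hE2 i, Category.assoc, Category.assoc, hsub,
            ← Category.assoc (Ψ.map (E i)) (inv (ρ.app ιΨ.a)), hx, Category.assoc,
            ← Functor.map_comp_assoc]
        · show W.map (homOfLE hj.le) ≫ E i ≫ m.hom.f = E j ≫ m.hom.f
          rw [← Category.assoc, hE1 j i hj.le]
      apply InducedCategory.hom_ext
      apply Endofunctor.Algebra.Hom.ext
      show m.hom.f = _ ≫ U l
      rw [← hv l, ← Category.assoc, hretr, Category.id_comp]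
    exact ⟨hειΨ, ⟨IsInitial.ofUniqueHom (fun B => (key B).choose)
      (fun B m => (key B).choose_spec m)⟩⟩
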